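/- If the rate satisfies R = 1 - H₂(δ) - ε for some ε > 0, then for a uniformly random n×m Toeplitz matrix over F_2, the probability that the associated linear code has minimum relative distance at most δ is at most 2^{-εm}. -/

import Mathlib

/-- The binary entropy function `H₂(δ) = -δ log₂ δ - (1-δ) log₂ (1-δ)`. -/
noncomputable def binEnt (δ : ℝ) : ℝ :=
  -δ * Real.logb 2 δ - (1 - δ) * Real.logb 2 (1 - δ)

/-- The `n × m` Toeplitz matrix over `F₂` determined by its first row and
first column, i.e. by `n + m - 1` entries. -/
def toeplitz (n m : ℕ) (t : Fin (n + m - 1) → ZMod 2) :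
    Matrix (Fin n) (Fin m) (ZMod 2) :=
  fun i j => t ⟨i.val + (m - 1) - j.val, by
    have hi := i.isLt; have hj := j.isLt; omega⟩

/-- If the rate satisfies `R = n/m = 1 - H₂(δ) - ε` for some `ε > 0`, then for a
uniformly random `n × m` Toeplitz matrix over `F₂` the probability that the
associated linear code has minimum relative distance at most `δ` is at most
`2^{-ε m}`. -/
lemma two_cases (a : ZMod 2) : a = 0 ∨ a = 1 := by revert a; decide

lemma ker_eq_zero (n m : ℕ) (hm : 1 ≤ m) (x : Fin n → ZMod 2) (i0 : Fin n)
    (hx0 : x i0 ≠ 0) (hmax : ∀ i : Fin n, i0.val < i.val → x i = 0)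
    (t : Fin (n + m - 1) → ZMod 2)
    (ht : Matrix.vecMul x (toeplitz n m t) = 0)
    (hout : ∀ k : Fin (n + m - 1), k.val < i0.val ∨ i0.val + m ≤ k.val → t k = 0) :
    t = 0 := by
  have key : ∀ v : ℕ, ∀ k : Fin (n + m - 1), k.val = v → t k = 0 := by
    intro v
    induction v using Nat.strong_induction_on with
    | _ v IH =>
      intro k hk
      by_cases hcase : k.val < i0.val ∨ i0.val + m ≤ k.val
      · exact hout k hcase
      · push_neg at hcase
        obtain ⟨h1, h2⟩ := hcase
        have hj : i0.val + m - 1 - v < m := by omega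
        have heq := congrFun ht ⟨i0.val + m - 1 - v, hj⟩
        simp only [Matrix.vecMul, dotProduct, toeplitz, Pi.zero_apply] at heq
        rw [Finset.sum_eq_single i0] at heq
        · have hidx : i0.val + (m - 1) - (i0.val + m - 1 - v) = k.val := by omega
          rcases mul_eq_zero.mp heq with h | h
          · exact absurd h hx0
          · convert h using 2
            exact Fin.ext hidx.symm
        · intro i _ hne
          rcases lt_or_gt_of_ne (fun h : i.val = i0.val => hne (Fin.ext h)) with hlt | hgt
          · have : i.val + (m - 1) - (i0.val + m - 1 - v) < v := by omega
            rw [IH _ this _ rfl, mul_zero]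
          · rw [hmax i hgt, zero_mul]
        · intro h
          exact absurd (Finset.mem_univ i0) h
  funext k
  exact key k.val k rfl

lemma card_fixed (n m : ℕ) (hn : 1 ≤ n) (hm : 1 ≤ m) (δ : ℝ)
    (x : Fin n → ZMod 2) (hx : x ≠ 0) :
    (Finset.univ.filter fun t : Fin (n + m - 1) → ZMod 2 =>
        ((hammingNorm (Matrix.vecMul x (toeplitz n m t)) : ℝ) ≤ δ * m)).card
      ≤ 2 ^ (n - 1) *
        (Finset.univ.filter fun y : Fin m → ZMod 2 =>
          ((hammingNorm y : ℝ) ≤ δ * m)).card := by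
  classical
  -- maximal index of support of x
  have hs : (Finset.univ.filter fun i => x i ≠ 0).Nonempty := by
    by_contra h
    apply hx
    funext i
    rw [Finset.not_nonempty_iff_eq_empty, Finset.filter_eq_empty_iff] at h
    have := h (Finset.mem_univ i)
    simpa using this
  obtain ⟨i0, hx0, hmax⟩ :
      ∃ i0 : Fin n, x i0 ≠ 0 ∧ ∀ i : Fin n, i0.val < i.val → x i = 0 := by
    refine ⟨(Finset.univ.filter fun i => x i ≠ 0).max' hs, ?_, ?_⟩
    · have := (Finset.univ.filter fun i => x i ≠ 0).max'_mem hs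
      simpa using this
    · intro i hi
      by_contra h
      have : i ≤ (Finset.univ.filter fun i => x i ≠ 0).max' hs :=
        Finset.le_max' _ i (by simpa using h)
      exact absurd (lt_of_lt_of_le hi this) (lt_irrefl _)
  set P : Fin (n + m - 1) → Prop :=
    fun k => k.val < i0.val ∨ i0.val + m ≤ k.val with hP
  have hi0lt := i0.isLt
  -- explicit enumeration of the indices satisfying P
  set e : Fin (n - 1) → Fin (n + m - 1) := fun a =>
    if h : a.val < i0.val then ⟨a.val, by omega⟩ else ⟨a.val + m, by have := a.isLt; omega⟩
    with he
  have hsurjP : ∀ k : Fin (n + m - 1), P k → ∃ a : Fin (n - 1), e a = k := by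
    intro k hk
    rcases hk with hk | hk
    · refine ⟨⟨k.val, by omega⟩, ?_⟩
      simp only [he]
      rw [dif_pos (by simpa using hk)]
    · have hklt := k.isLt
      refine ⟨⟨k.val - m, by omega⟩, ?_⟩
      simp only [he]
      rw [dif_neg (by simp; omega)]
      exact Fin.ext (by simp; omega)
  -- each fiber of the syndrome map has at most 2^(n-1) elements
  have fib : ∀ y : Fin m → ZMod 2,
      (Finset.univ.filter fun t : Fin (n + m - 1) → ZMod 2 =>
        Matrix.vecMul x (toeplitz n m t) = y).card ≤ 2 ^ (n - 1) := by
    intro y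
    have := Finset.card_le_card_of_injOn
      (s := Finset.univ.filter fun t : Fin (n + m - 1) → ZMod 2 =>
        Matrix.vecMul x (toeplitz n m t) = y)
      (f := fun (t : Fin (n + m - 1) → ZMod 2) (a : Fin (n - 1)) => t (e a))
      (t := (Finset.univ : Finset (Fin (n - 1) → ZMod 2)))
      (fun a _ => Finset.mem_univ _) ?_
    · calc (Finset.univ.filter fun t : Fin (n + m - 1) → ZMod 2 =>
            Matrix.vecMul x (toeplitz n m t) = y).card
          ≤ (Finset.univ : Finset (Fin (n - 1) → ZMod 2)).card := this
        _ = 2 ^ (n - 1) := by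
            rw [Finset.card_univ, Fintype.card_fun]
            simp
    · intro t ht t' ht' hfun
      simp only [Finset.coe_filter, Set.mem_setOf_eq, Finset.mem_univ, true_and] at ht ht'
      have htoep : toeplitz n m (t - t') = toeplitz n m t - toeplitz n m t' := by
        funext i j
        simp [toeplitz]
      have hker : Matrix.vecMul x (toeplitz n m (t - t')) = 0 := by
        rw [htoep, Matrix.vecMul_sub, ht, ht', sub_self]
      have hzero : t - t' = 0 := by
        apply ker_eq_zero n m hm x i0 hx0 hmax _ hker
        intro k hk
        obtain ⟨a, rfl⟩ := hsurjP k hk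
        have := congrFun hfun a
        simpa [sub_eq_zero] using this
      exact sub_eq_zero.mp hzero
  -- combine
  set s := Finset.univ.filter fun t : Fin (n + m - 1) → ZMod 2 =>
    ((hammingNorm (Matrix.vecMul x (toeplitz n m t)) : ℝ) ≤ δ * m) with hsdef
  set f : (Fin (n + m - 1) → ZMod 2) → (Fin m → ZMod 2) :=
    fun t => Matrix.vecMul x (toeplitz n m t) with hfdef
  have h1 : s.card ≤ 2 ^ (n - 1) * (s.image f).card := by
    apply Finset.card_le_mul_card_image
    intro a _
    calc (s.filter fun t => f t = a).card
        ≤ (Finset.univ.filter fun t => f t = a).card :=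
          Finset.card_le_card (Finset.filter_subset_filter _ (Finset.subset_univ s))
      _ ≤ 2 ^ (n - 1) := fib a
  have h2 : s.image f ⊆ Finset.univ.filter fun y : Fin m → ZMod 2 =>
      ((hammingNorm y : ℝ) ≤ δ * m) := by
    intro y hy
    obtain ⟨t, ht, rfl⟩ := Finset.mem_image.mp hy
    simp only [hsdef, Finset.mem_filter, Finset.mem_univ, true_and] at ht ⊢
    exact ht
  calc s.card ≤ 2 ^ (n - 1) * (s.image f).card := h1
    _ ≤ 2 ^ (n - 1) * (Finset.univ.filter fun y : Fin m → ZMod 2 =>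
        ((hammingNorm y : ℝ) ≤ δ * m)).card :=
          Nat.mul_le_mul_left _ (Finset.card_le_card h2)

lemma vol_le (m : ℕ) (δ : ℝ) (hδ0 : 0 ≤ δ) :
    (Finset.univ.filter fun y : Fin m → ZMod 2 => ((hammingNorm y : ℝ) ≤ δ * m)).card
      ≤ ∑ k ∈ Finset.range (⌊δ * m⌋₊ + 1), m.choose k := by
  classical
  set v := ⌊δ * m⌋₊ with hv
  have h1 : (Finset.univ.filter fun y : Fin m → ZMod 2 =>
      ((hammingNorm y : ℝ) ≤ δ * m)).card ≤
      ((Finset.range (v + 1)).biUnion fun k =>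
        Finset.powersetCard k (Finset.univ : Finset (Fin m))).card := by
    apply Finset.card_le_card_of_injOn
      (f := fun y : Fin m → ZMod 2 => Finset.univ.filter fun i => y i ≠ 0)
    · intro y hy
      simp only [Finset.coe_filter, Finset.mem_filter, Finset.mem_univ, true_and, Set.mem_setOf_eq] at hy
      rw [Finset.mem_coe, Finset.mem_biUnion]
      refine ⟨hammingNorm y, ?_, ?_⟩
      · rw [Finset.mem_range]
        have : hammingNorm y ≤ v := Nat.le_floor hy
        omega
      · rw [Finset.mem_powersetCard]
        exact ⟨Finset.subset_univ _, rfl⟩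
    · intro y hy y' hy' hsupp
      funext i
      have hmem := Finset.ext_iff.mp hsupp i
      simp only [Finset.mem_filter, Finset.mem_univ, true_and] at hmem
      rcases two_cases (y i) with h | h <;> rcases two_cases (y' i) with h' | h' <;>
        simp_all
  calc _ ≤ _ := h1
    _ ≤ ∑ k ∈ Finset.range (v + 1),
          (Finset.powersetCard k (Finset.univ : Finset (Fin m))).card :=
        Finset.card_biUnion_le
    _ = ∑ k ∈ Finset.range (v + 1), m.choose k := by
        apply Finset.sum_congr rfl
        intro k _
        rw [Finset.card_powersetCard, Finset.card_fin]

lemma sum_choose_le (m : ℕ) (hm : 1 ≤ m) (δ : ℝ) (hδ0 : 0 < δ) (hδ1 : δ < 1 / 2) :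
    ((∑ k ∈ Finset.range (⌊δ * m⌋₊ + 1), m.choose k : ℕ) : ℝ)
      ≤ 2 ^ (binEnt δ * m) := by
  have h1δ : 0 < 1 - δ := by linarith
  have hδδ : δ ≤ 1 - δ := by linarith
  set r : ℝ := δ / (1 - δ) with hr
  have hr0 : 0 < r := div_pos hδ0 h1δ
  have hr1 : r ≤ 1 := by
    rw [div_le_one h1δ]; exact hδδ
  set v := ⌊δ * m⌋₊ with hv
  have hδm0 : 0 ≤ δ * m := by positivity
  have hvle : (v : ℝ) ≤ δ * m := Nat.floor_le hδm0
  have hvm : v < m := by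
    have hlt : δ * m < m := by
      have : (0:ℝ) < m := by exact_mod_cast hm
      nlinarith
    have : (v : ℝ) < (m : ℝ) := lt_of_le_of_lt hvle hlt
    exact_mod_cast this
  set A : ℝ := δ ^ (δ * m) * (1 - δ) ^ ((1 - δ) * m) with hA
  have hApos : 0 < A := by
    apply mul_pos <;> exact Real.rpow_pos_of_pos (by linarith) _
  -- A ≤ δ^k (1-δ)^(m-k) for k ≤ v
  have key : ∀ k ∈ Finset.range (v + 1), A ≤ δ ^ k * (1 - δ) ^ (m - k) := by
    intro k hk
    rw [Finset.mem_range] at hk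
    have hkv : k ≤ v := by omega
    have hkm : k ≤ m := by omega
    have hkδm : (k : ℝ) ≤ δ * m := le_trans (by exact_mod_cast hkv) hvle
    have hAeq : A = (1 - δ) ^ m * r ^ (δ * m) := by
      rw [hA, hr]
      have hδeq : δ = (1 - δ) * (δ / (1 - δ)) := by field_simp
      calc δ ^ (δ * m) * (1 - δ) ^ ((1 - δ) * m)
          = ((1 - δ) * (δ / (1 - δ))) ^ (δ * m) * (1 - δ) ^ ((1 - δ) * m) := by
            rw [← hδeq]
        _ = (1 - δ) ^ (δ * m) * (δ / (1 - δ)) ^ (δ * m) * (1 - δ) ^ ((1 - δ) * m) := by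
            rw [Real.mul_rpow (le_of_lt h1δ) (le_of_lt (div_pos hδ0 h1δ))]
        _ = ((1 - δ) ^ (δ * m) * (1 - δ) ^ ((1 - δ) * m)) * (δ / (1 - δ)) ^ (δ * m) := by
            ring
        _ = (1 - δ) ^ ((m : ℝ)) * (δ / (1 - δ)) ^ (δ * m) := by
            rw [← Real.rpow_add h1δ]
            ring_nf
        _ = (1 - δ) ^ m * (δ / (1 - δ)) ^ (δ * m) := by
            rw [Real.rpow_natCast]
    have hterm : δ ^ k * (1 - δ) ^ (m - k) = (1 - δ) ^ m * r ^ k := by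
      rw [hr, div_pow]
      have h := pow_sub_mul_pow (1 - δ) hkm
      have hne : ((1 - δ) ^ k : ℝ) ≠ 0 := by positivity
      field_simp
      linear_combination h
    rw [hAeq, hterm]
    apply mul_le_mul_of_nonneg_left _ (by positivity)
    calc r ^ (δ * m) ≤ r ^ ((k : ℝ)) :=
          Real.rpow_le_rpow_of_exponent_ge hr0 hr1 hkδm
      _ = r ^ k := Real.rpow_natCast r k
  -- sum bound via binomial theorem
  have hsum : (∑ k ∈ Finset.range (v + 1), (m.choose k : ℝ)) * A ≤ 1 := by
    rw [Finset.sum_mul]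
    calc ∑ k ∈ Finset.range (v + 1), (m.choose k : ℝ) * A
        ≤ ∑ k ∈ Finset.range (v + 1), δ ^ k * (1 - δ) ^ (m - k) * (m.choose k : ℝ) := by
          apply Finset.sum_le_sum
          intro k hk
          rw [mul_comm (δ ^ k * (1 - δ) ^ (m - k))]
          exact mul_le_mul_of_nonneg_left (key k hk) (by positivity)
      _ ≤ ∑ k ∈ Finset.range (m + 1), δ ^ k * (1 - δ) ^ (m - k) * (m.choose k : ℝ) := by
          apply Finset.sum_le_sum_of_subset_of_nonneg
          · intro k hk
            rw [Finset.mem_range] at *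
            omega
          · intro k _ _
            positivity
      _ = (δ + (1 - δ)) ^ m := by rw [add_pow]
      _ = 1 := by norm_num
  have hA2 : A = 2 ^ (-(binEnt δ * m)) := by
    rw [hA]
    have e1 : δ = (2 : ℝ) ^ Real.logb 2 δ :=
      (Real.rpow_logb (by norm_num) (by norm_num) hδ0).symm
    have e2 : 1 - δ = (2 : ℝ) ^ Real.logb 2 (1 - δ) :=
      (Real.rpow_logb (by norm_num) (by norm_num) h1δ).symm
    calc δ ^ (δ * m) * (1 - δ) ^ ((1 - δ) * m)
        = ((2 : ℝ) ^ Real.logb 2 δ) ^ (δ * m) *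
          ((2 : ℝ) ^ Real.logb 2 (1 - δ)) ^ ((1 - δ) * m) := by rw [← e1, ← e2]
      _ = (2 : ℝ) ^ (Real.logb 2 δ * (δ * m)) *
          (2 : ℝ) ^ (Real.logb 2 (1 - δ) * ((1 - δ) * m)) := by
            rw [← Real.rpow_mul (by norm_num), ← Real.rpow_mul (by norm_num)]
      _ = (2 : ℝ) ^ (Real.logb 2 δ * (δ * m) + Real.logb 2 (1 - δ) * ((1 - δ) * m)) := by
            rw [← Real.rpow_add (by norm_num : (0:ℝ) < 2)]
      _ = 2 ^ (-(binEnt δ * m)) := by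
            unfold binEnt; ring_nf
  push_cast
  calc (∑ k ∈ Finset.range (v + 1), (m.choose k : ℝ))
      = (∑ k ∈ Finset.range (v + 1), (m.choose k : ℝ)) * A * A⁻¹ := by
        field_simp
    _ ≤ 1 * A⁻¹ := by
        apply mul_le_mul_of_nonneg_right hsum (le_of_lt (inv_pos.mpr hApos))
    _ = 2 ^ (binEnt δ * m) := by
        rw [one_mul, hA2, ← Real.rpow_neg (by norm_num), neg_neg]

theorem toeplitz_GV_rate_bound (n m : ℕ) (hnm : n < m) (δ R ε : ℝ)
    (hδ : δ ∈ Set.Ioo (0 : ℝ) (1 / 2)) (hR : R = (n : ℝ) / m)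
    (hε : 0 < ε) (hrate : R = 1 - binEnt δ - ε) :
    (Nat.card {t : Fin (n + m - 1) → ZMod 2 //
        ∃ x : Fin n → ZMod 2, x ≠ 0 ∧
          ((hammingNorm (Matrix.vecMul x (toeplitz n m t)) : ℝ) ≤ δ * m)} : ℝ)
      / 2 ^ (n + m - 1)
      ≤ 2 ^ (-ε * m) := by
  classical
  obtain ⟨hδ0, hδhalf⟩ := hδ
  have hm1 : 1 ≤ m := by omega
  have hmpos : (0 : ℝ) < m := by exact_mod_cast (by omega : 0 < m)
  rcases Nat.eq_zero_or_pos n with hn0 | hn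
  · subst hn0
    have hemp : IsEmpty {t : Fin (0 + m - 1) → ZMod 2 //
        ∃ x : Fin 0 → ZMod 2, x ≠ 0 ∧
          ((hammingNorm (Matrix.vecMul x (toeplitz 0 m t)) : ℝ) ≤ δ * m)} := by
      constructor
      rintro ⟨t, x, hx, -⟩
      exact hx (Subsingleton.elim x 0)
    rw [Nat.card_of_isEmpty]
    norm_num
    positivity
  -- main case
  have hn' : (n : ℝ) = (1 - binEnt δ - ε) * m := by
    have h1 : (n : ℝ) = R * m := by rw [hR]; field_simp
    rw [hrate] at h1; exact h1
  set V := (Finset.univ.filter fun y : Fin m → ZMod 2 =>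
      ((hammingNorm y : ℝ) ≤ δ * m)).card with hVdef
  have hVbound : (V : ℝ) ≤ 2 ^ (binEnt δ * m) := by
    calc (V : ℝ) ≤ ((∑ k ∈ Finset.range (⌊δ * m⌋₊ + 1), m.choose k : ℕ) : ℝ) := by
          exact_mod_cast vol_le m δ (le_of_lt hδ0)
      _ ≤ 2 ^ (binEnt δ * m) := sum_choose_le m hm1 δ hδ0 hδhalf
  -- cardinality of the bad set
  have hcardeq : Nat.card {t : Fin (n + m - 1) → ZMod 2 //
        ∃ x : Fin n → ZMod 2, x ≠ 0 ∧
          ((hammingNorm (Matrix.vecMul x (toeplitz n m t)) : ℝ) ≤ δ * m)}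
      = (Finset.univ.filter fun t : Fin (n + m - 1) → ZMod 2 =>
          ∃ x : Fin n → ZMod 2, x ≠ 0 ∧
            ((hammingNorm (Matrix.vecMul x (toeplitz n m t)) : ℝ) ≤ δ * m)).card := by
    rw [Nat.card_eq_fintype_card, Fintype.card_subtype]
  have hsub : (Finset.univ.filter fun t : Fin (n + m - 1) → ZMod 2 =>
        ∃ x : Fin n → ZMod 2, x ≠ 0 ∧
          ((hammingNorm (Matrix.vecMul x (toeplitz n m t)) : ℝ) ≤ δ * m))
      ⊆ (Finset.univ : Finset (Fin n → ZMod 2)).biUnion fun x =>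
          Finset.univ.filter fun t : Fin (n + m - 1) → ZMod 2 =>
            x ≠ 0 ∧ ((hammingNorm (Matrix.vecMul x (toeplitz n m t)) : ℝ) ≤ δ * m) := by
    intro t ht
    rw [Finset.mem_filter] at ht
    obtain ⟨-, x, hx, hw⟩ := ht
    rw [Finset.mem_biUnion]
    exact ⟨x, Finset.mem_univ _, by rw [Finset.mem_filter]; exact ⟨Finset.mem_univ _, hx, hw⟩⟩
  have hcount : (Finset.univ.filter fun t : Fin (n + m - 1) → ZMod 2 =>
        ∃ x : Fin n → ZMod 2, x ≠ 0 ∧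
          ((hammingNorm (Matrix.vecMul x (toeplitz n m t)) : ℝ) ≤ δ * m)).card
      ≤ 2 ^ n * (2 ^ (n - 1) * V) := by
    calc _ ≤ ((Finset.univ : Finset (Fin n → ZMod 2)).biUnion fun x =>
            Finset.univ.filter fun t : Fin (n + m - 1) → ZMod 2 =>
              x ≠ 0 ∧ ((hammingNorm (Matrix.vecMul x (toeplitz n m t)) : ℝ) ≤ δ * m)).card :=
          Finset.card_le_card hsub
      _ ≤ ∑ x : Fin n → ZMod 2,
            (Finset.univ.filter fun t : Fin (n + m - 1) → ZMod 2 =>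
              x ≠ 0 ∧ ((hammingNorm (Matrix.vecMul x (toeplitz n m t)) : ℝ) ≤ δ * m)).card :=
          Finset.card_biUnion_le
      _ ≤ ∑ _x : Fin n → ZMod 2, 2 ^ (n - 1) * V := by
          apply Finset.sum_le_sum
          intro x _
          by_cases hx : x = 0
          · subst hx
            simp
          · calc (Finset.univ.filter fun t : Fin (n + m - 1) → ZMod 2 =>
                  x ≠ 0 ∧ ((hammingNorm (Matrix.vecMul x (toeplitz n m t)) : ℝ) ≤ δ * m)).card
                ≤ (Finset.univ.filter fun t : Fin (n + m - 1) → ZMod 2 =>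
                  ((hammingNorm (Matrix.vecMul x (toeplitz n m t)) : ℝ) ≤ δ * m)).card := by
                  apply Finset.card_le_card
                  intro t ht
                  simp only [Finset.mem_filter] at ht ⊢
                  exact ⟨ht.1, ht.2.2⟩
              _ ≤ 2 ^ (n - 1) * V := card_fixed n m hn hm1 δ x hx
      _ = 2 ^ n * (2 ^ (n - 1) * V) := by
          rw [Finset.sum_const, Finset.card_univ, Fintype.card_fun]
          simp [mul_comm]
  -- put everything together
  rw [hcardeq, div_le_iff₀ (by positivity)]
  have hc1 : ((n - 1 : ℕ) : ℝ) = (n : ℝ) - 1 := by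
    rw [Nat.cast_sub hn]; norm_num
  have hc2 : ((n + m - 1 : ℕ) : ℝ) = (n : ℝ) + m - 1 := by
    rw [Nat.cast_sub (by omega : 1 ≤ n + m)]; push_cast; ring
  calc ((Finset.univ.filter fun t : Fin (n + m - 1) → ZMod 2 =>
        ∃ x : Fin n → ZMod 2, x ≠ 0 ∧
          ((hammingNorm (Matrix.vecMul x (toeplitz n m t)) : ℝ) ≤ δ * m)).card : ℝ)
      ≤ (2 : ℝ) ^ n * ((2 : ℝ) ^ (n - 1) * (V : ℝ)) := by exact_mod_cast hcount
    _ ≤ (2 : ℝ) ^ n * ((2 : ℝ) ^ (n - 1) * (2 : ℝ) ^ (binEnt δ * m)) := by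
        apply mul_le_mul_of_nonneg_left _ (by positivity)
        exact mul_le_mul_of_nonneg_left hVbound (by positivity)
    _ = (2 : ℝ) ^ ((n : ℝ)) * ((2 : ℝ) ^ ((n : ℝ) - 1) * (2 : ℝ) ^ (binEnt δ * m)) := by
        rw [← Real.rpow_natCast 2 n, ← Real.rpow_natCast 2 (n - 1), hc1]
    _ = (2 : ℝ) ^ ((n : ℝ) + ((n : ℝ) - 1) + binEnt δ * m) := by
        rw [← Real.rpow_add (by norm_num : (0:ℝ) < 2),
          ← Real.rpow_add (by norm_num : (0:ℝ) < 2)]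
        ring_nf
    _ = (2 : ℝ) ^ (-ε * m) * (2 : ℝ) ^ (((n + m - 1 : ℕ) : ℝ)) := by
        rw [← Real.rpow_add (by norm_num : (0:ℝ) < 2), hc2]
        congr 1
        rw [hn']
        ring
    _ = (2 : ℝ) ^ (-ε * m) * 2 ^ (n + m - 1) := by
        rw [Real.rpow_natCast]
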